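/- Let n ≥ 1 and L = w_1⋯w_{2n} ∈ 𝓛_n. Then the number of P2-matches in L equals bounce⁻(L), the number of indices i with 1 ≤ i ≤ n−1 such that w_1⋯w_{2i} contains exactly i E's and i N's, w_{2i} = N, and w_{2i+1} = E (points [i,i] on the path preceded by a north step and followed by an east step). By symmetry, the number of P5-matches in L equals bounce⁺(L), the number of indices i with 1 ≤ i ≤ n−1 such that w_1⋯w_{2i} contains exactly i E's and i N's, w_{2i} = E, and w_{2i+1} = N. -/

import Mathlib

/-!
Words over the alphabet {E, N} are encoded as `List Bool`,
with `true` representing an east step `E` and `false` a north step `N`.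
The word `w = w_1 ⋯ w_{2n}` corresponds to the lattice path from `(0,0)` to
`(n,n)` whose `j`-th step is east if `w_j = true` and north if `w_j = false`.
-/

/-- `w ∈ 𝓛_n`: the word `w` has exactly `n` `E`'s and `n` `N`'s. -/
def memL (n : ℕ) (w : List Bool) : Prop :=
  w.count true = n ∧ w.count false = n

/-- The (0-indexed, increasing) list of positions at which the letter `b` occurs in `w`. -/
def occPos (w : List Bool) (b : Bool) : List ℕ :=
  (List.range w.length).filter (fun j => w.getD j (!b) == b)

/-- `ps_w({i, i+1})` (with `i` 1-indexed): the length-4 word obtained from `w` by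
deleting, for each `j ∉ {i, i+1}`, the `j`-th occurrence of `E` and the `j`-th
occurrence of `N` (counted from left to right); i.e. the word formed by the
`i`-th and `(i+1)`-th occurrences of `E` and of `N`, read in their original order. -/
def pairedSubword (w : List Bool) (i : ℕ) : List Bool :=
  let keep : List ℕ := [(occPos w true).getD (i-1) 0, (occPos w true).getD i 0,
                        (occPos w false).getD (i-1) 0, (occPos w false).getD i 0]
  ((List.range w.length).filter (fun j => keep.contains j)).map (fun j => w.getD j true)

/-- `P`-mch(w): the number of paired steps `i` with `1 ≤ i ≤ n-1` at which the
paired pattern `P` matches in `w ∈ 𝓛_n`. -/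
def pmch (n : ℕ) (P w : List Bool) : ℕ :=
  ((Finset.Icc 1 (n-1)).filter (fun i => pairedSubword w i = P)).card

def P1 : List Bool := [true, true, false, false]   -- EENN
def P2 : List Bool := [true, false, true, false]   -- ENEN
def P3 : List Bool := [false, true, true, false]   -- NEEN
def P4 : List Bool := [true, false, false, true]   -- ENNE
def P5 : List Bool := [false, true, false, true]   -- NENE
def P6 : List Bool := [false, false, true, true]   -- NNEE

/-- The path of `w` passes through the interior diagonal point `[i,i]`:
the prefix `w_1 ⋯ w_{2i}` contains exactly `i` `E`'s and `i` `N`'s. -/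
abbrev onDiag (w : List Bool) (i : ℕ) : Prop :=
  (w.take (2*i)).count true = i ∧ (w.take (2*i)).count false = i

/-- `bounce⁻(w)`: the number of interior diagonal points of the path preceded by a
north step and followed by an east step. -/
def bounceMinus (n : ℕ) (w : List Bool) : ℕ :=
  ((Finset.Icc 1 (n-1)).filter (fun i =>
    onDiag w i ∧ w.getD (2*i-1) true = false ∧ w.getD (2*i) false = true)).card

/-- `bounce⁺(w)`: the number of interior diagonal points of the path preceded by an
east step and followed by a north step. -/
def bouncePlus (n : ℕ) (w : List Bool) : ℕ :=
  ((Finset.Icc 1 (n-1)).filter (fun i =>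
    onDiag w i ∧ w.getD (2*i-1) false = true ∧ w.getD (2*i) true = false)).card


lemma bool_count_add (v : List Bool) (x : Bool) : v.count x + v.count (!x) = v.length := by
  induction v with
  | nil => simp
  | cons h t ih => rw [List.count_cons, List.count_cons, List.length_cons]
                   cases h <;> cases x <;> simp only [Bool.not_true, Bool.not_false] at ih ⊢ <;> simp <;> omega

lemma mem_occPos {w : List Bool} {b : Bool} {j : ℕ} :
    j ∈ occPos w b ↔ ∃ h : j < w.length, w[j] = b := by
  simp only [occPos, List.mem_filter, List.mem_range, beq_iff_eq]
  constructor
  · rintro ⟨h1, h2⟩; exact ⟨h1, by rwa [List.getD_eq_getElem _ _ h1] at h2⟩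
  · rintro ⟨h1, h2⟩; exact ⟨h1, by rwa [List.getD_eq_getElem _ _ h1]⟩

lemma occPos_pairwise (w : List Bool) (b : Bool) : (occPos w b).Pairwise (· < ·) :=
  List.pairwise_lt_range.filter _

lemma occPos_nodup (w : List Bool) (b : Bool) : (occPos w b).Nodup :=
  (occPos_pairwise w b).imp (fun h => Nat.ne_of_lt h)

lemma count_eq_length_filter (v : List Bool) (b : Bool) :
    v.count b = ((List.range v.length).filter (fun j => v.getD j (!b) == b)).length := by
  induction v with
  | nil => simp
  | cons h t ih =>
    rw [List.length_cons, List.range_succ_eq_map, List.filter_cons, List.count_cons, ih,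
        List.filter_map]
    have hc : ((fun j => (h :: t).getD j (!b) == b) ∘ Nat.succ) = fun j => t.getD j (!b) == b := by
      funext j; simp [Function.comp, List.getD_cons_succ]
    rw [hc]
    by_cases hb : h = b <;> simp [hb]

lemma length_occPos (w : List Bool) (b : Bool) : (occPos w b).length = w.count b :=
  (count_eq_length_filter w b).symm

lemma count_take (w : List Bool) (b : Bool) (m : ℕ) :
    (w.take m).count b = ((occPos w b).filter (fun j => decide (j < m))).length := by
  rw [count_eq_length_filter]
  apply List.Perm.length_eq
  apply (List.perm_ext_iff_of_nodup ?_ ?_).2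
  · intro j
    simp only [List.mem_filter, List.mem_range, beq_iff_eq, occPos, decide_eq_true_eq]
    constructor
    · rintro ⟨h1, h2⟩
      have h1' : j < min m w.length := by rwa [List.length_take] at h1
      have hj : j < w.length := lt_of_lt_of_le h1' (min_le_right _ _)
      have hjm : j < m := lt_of_lt_of_le h1' (min_le_left _ _)
      refine ⟨⟨hj, ?_⟩, hjm⟩
      rw [List.getD_eq_getElem _ _ h1] at h2
      rw [List.getD_eq_getElem _ _ hj, ← List.getElem_take (xs := w) (j := m) (h := h1)]
      exact h2
    · rintro ⟨⟨h1, h2⟩, h3⟩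
      have h4 : j < (List.take m w).length := by rw [List.length_take]; exact lt_min h3 h1
      refine ⟨h4, ?_⟩
      rw [List.getD_eq_getElem _ _ h4, List.getElem_take (xs := w)]
      rwa [List.getD_eq_getElem _ _ h1] at h2
  · exact (List.pairwise_lt_range.filter _).imp (fun h => Nat.ne_of_lt h)
  · exact (occPos_nodup w b).filter _

lemma sorted_filter_lt_take {s : List ℕ} (hs : s.Pairwise (· < ·)) {k : ℕ} (hk : k < s.length) :
    s.filter (fun j => decide (j < s[k])) = s.take k := by
  have hsplit : s.take k ++ s.drop k = s := List.take_append_drop k s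
  have hdrop : s.drop k = s[k] :: s.drop (k + 1) := List.drop_eq_getElem_cons hk
  have hp : s[k] ∈ s.drop k := by rw [hdrop]; exact List.mem_cons_self
  have hpair : (s.take k ++ s.drop k).Pairwise (· < ·) := by rwa [hsplit]
  rw [List.pairwise_append] at hpair
  obtain ⟨h1, h2, h3⟩ := hpair
  obtain ⟨p, hpeq⟩ : ∃ p, p = s[k] := ⟨_, rfl⟩
  rw [← hpeq] at hdrop hp ⊢
  have e1 : (s.take k).filter (fun j => decide (j < p)) = s.take k := by
    rw [List.filter_eq_self]
    intro a ha
    simp only [decide_eq_true_eq]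
    exact h3 a ha _ hp
  have e2 : (s.drop k).filter (fun j => decide (j < p)) = [] := by
    rw [List.filter_eq_nil_iff]
    intro a ha
    simp only [decide_eq_true_eq, not_lt]
    rw [hdrop] at ha h2
    rcases List.mem_cons.1 ha with h | h
    · omega
    · exact le_of_lt ((List.pairwise_cons.1 h2).1 a h)
  calc s.filter (fun j => decide (j < p))
      = (s.take k ++ s.drop k).filter (fun j => decide (j < p)) := by rw [hsplit]
    _ = s.take k := by rw [List.filter_append, e1, e2, List.append_nil]

lemma occPos_getD_eq_iff {w : List Bool} {b : Bool} {k : ℕ} (hk : k < (occPos w b).length)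
    {p : ℕ} :
    (occPos w b).getD k 0 = p ↔ ∃ hp : p < w.length, w[p] = b ∧ (w.take p).count b = k := by
  rw [List.getD_eq_getElem _ _ hk]
  constructor
  · rintro rfl
    obtain ⟨hp, hb⟩ := mem_occPos.1 (List.getElem_mem hk)
    refine ⟨hp, hb, ?_⟩
    rw [count_take, sorted_filter_lt_take (occPos_pairwise w b) hk, List.length_take]
    omega
  · rintro ⟨hp, hb, hc⟩
    obtain ⟨j, hj, hjp⟩ := List.mem_iff_getElem.1 (mem_occPos.2 ⟨hp, hb⟩)
    have : (w.take ((occPos w b)[j])).count b = j := by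
      rw [count_take, sorted_filter_lt_take (occPos_pairwise w b) hj, List.length_take]
      omega
    rw [hjp, hc] at this
    subst this
    rw [hjp]

lemma getD_indep {w : List Bool} {j : ℕ} (h : j < w.length) (d d' : Bool) :
    w.getD j d = w.getD j d' := by
  rw [List.getD_eq_getElem _ _ h, List.getD_eq_getElem _ _ h]

lemma count_take_mono (w : List Bool) (b : Bool) {m m' : ℕ} (h : m ≤ m') :
    (w.take m).count b ≤ (w.take m').count b := by
  have e : w.take m = (w.take m').take m := by rw [List.take_take, min_eq_left h]
  rw [e]
  exact (List.take_sublist _ _).count_le b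

lemma count_take_succ_getElem (w : List Bool) (b : Bool) {p : ℕ} (hp : p < w.length) :
    (w.take (p+1)).count b = (w.take p).count b + (if w[p] = b then 1 else 0) := by
  rw [List.take_succ, List.getElem?_eq_getElem hp]
  rw [Option.toList_some, List.count_append, List.count_singleton']

lemma filter_mem_four {L x1 x2 x3 x4 : ℕ} (h12 : x1 < x2) (h23 : x2 < x3) (h34 : x3 < x4)
    (h4 : x4 < L) (keep : List ℕ)
    (hk : ∀ j, keep.contains j = true ↔ (j = x1 ∨ j = x2 ∨ j = x3 ∨ j = x4)) :
    (List.range L).filter (fun j => keep.contains j) = [x1, x2, x3, x4] := by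
  have hs1 : ((List.range L).filter (fun j => keep.contains j)).Pairwise (· < ·) :=
    (List.pairwise_lt_range (n := L)).filter _
  have hs2 : ([x1, x2, x3, x4] : List ℕ).Pairwise (· < ·) := by
    simp [List.pairwise_cons]; omega
  apply List.Perm.eq_of_pairwise' (r := (· ≤ ·)) (hs1.imp le_of_lt) (hs2.imp le_of_lt) ?_
  apply (List.perm_ext_iff_of_nodup (hs1.imp fun h => Nat.ne_of_lt h)
    (hs2.imp fun h => Nat.ne_of_lt h)).2
  intro j
  simp only [List.mem_filter, List.mem_range, hk, List.mem_cons, List.not_mem_nil, or_false]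
  constructor
  · rintro ⟨-, h⟩; exact h
  · rintro h; exact ⟨by rcases h with rfl|rfl|rfl|rfl <;> omega, h⟩

lemma core (x : Bool) {n i : ℕ} (h1 : 1 ≤ i) (h2 : i ≤ n - 1) (hn : 1 ≤ n) {w : List Bool}
    (hx : w.count x = n) (hnx : w.count (!x) = n) :
    pairedSubword w i = [x, !x, x, !x] ↔
      (((w.take (2*i)).count x = i ∧ (w.take (2*i)).count (!x) = i) ∧
        w.getD (2*i-1) x = !x ∧ w.getD (2*i) (!x) = x) := by
  have hxnx : x ≠ !x := by cases x <;> simp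
  have hlen : w.length = 2 * n := by have := bool_count_add w x; omega
  have hi1 : i - 1 < (occPos w x).length := by rw [length_occPos, hx]; omega
  have hi2 : i < (occPos w x).length := by rw [length_occPos, hx]; omega
  have hi3 : i - 1 < (occPos w (!x)).length := by rw [length_occPos, hnx]; omega
  have hi4 : i < (occPos w (!x)).length := by rw [length_occPos, hnx]; omega
  obtain ⟨a, hadef⟩ : ∃ a, (occPos w x).getD (i-1) 0 = a := ⟨_, rfl⟩
  obtain ⟨b2, hbdef⟩ : ∃ b2, (occPos w x).getD i 0 = b2 := ⟨_, rfl⟩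
  obtain ⟨c, hcdef⟩ : ∃ c, (occPos w (!x)).getD (i-1) 0 = c := ⟨_, rfl⟩
  obtain ⟨d, hddef⟩ : ∃ d, (occPos w (!x)).getD i 0 = d := ⟨_, rfl⟩
  obtain ⟨haL, haw, hac⟩ := (occPos_getD_eq_iff hi1).1 hadef
  obtain ⟨hbL, hbw, hbc⟩ := (occPos_getD_eq_iff hi2).1 hbdef
  obtain ⟨hcL, hcw, hcc⟩ := (occPos_getD_eq_iff hi3).1 hcdef
  obtain ⟨hdL, hdw, hdc⟩ := (occPos_getD_eq_iff hi4).1 hddef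
  have haw' : w.getD a true = x := by rw [List.getD_eq_getElem _ _ haL]; exact haw
  have hbw' : w.getD b2 true = x := by rw [List.getD_eq_getElem _ _ hbL]; exact hbw
  have hcw' : w.getD c true = !x := by rw [List.getD_eq_getElem _ _ hcL]; exact hcw
  have hdw' : w.getD d true = !x := by rw [List.getD_eq_getElem _ _ hdL]; exact hdw
  have hab : a < b2 := by
    rw [← hadef, ← hbdef, List.getD_eq_getElem _ _ hi1, List.getD_eq_getElem _ _ hi2]
    exact List.pairwise_iff_getElem.1 (occPos_pairwise w x) _ _ hi1 hi2 (by omega)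
  have hcd : c < d := by
    rw [← hcdef, ← hddef, List.getD_eq_getElem _ _ hi3, List.getD_eq_getElem _ _ hi4]
    exact List.pairwise_iff_getElem.1 (occPos_pairwise w (!x)) _ _ hi3 hi4 (by omega)
  have hne_ac : a ≠ c := fun h => hxnx (by rw [h] at haw'; exact haw'.symm.trans hcw')
  have hne_ad : a ≠ d := fun h => hxnx (by rw [h] at haw'; exact haw'.symm.trans hdw')
  have hne_bc : b2 ≠ c := fun h => hxnx (by rw [h] at hbw'; exact hbw'.symm.trans hcw')
  have hne_bd : b2 ≠ d := fun h => hxnx (by rw [h] at hbw'; exact hbw'.symm.trans hdw')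
  have hkeep : ∀ j : ℕ,
      ([(occPos w true).getD (i-1) 0, (occPos w true).getD i 0,
        (occPos w false).getD (i-1) 0, (occPos w false).getD i 0] : List ℕ).contains j = true ↔
      (j = a ∨ j = b2 ∨ j = c ∨ j = d) := by
    intro j
    cases x
    · simp only [Bool.not_false] at hadef hbdef hcdef hddef
      simp only [hadef, hbdef, hcdef, hddef]
      simp only [List.contains_cons, List.contains_nil, Bool.or_eq_true, beq_iff_eq,
        Bool.false_eq_true, or_false]
      try tauto
    · simp only [Bool.not_true] at hadef hbdef hcdef hddef
      simp only [hadef, hbdef, hcdef, hddef]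
      simp only [List.contains_cons, List.contains_nil, Bool.or_eq_true, beq_iff_eq,
        Bool.false_eq_true, or_false]
      try tauto
  have key4 : ∀ y1 y2 y3 y4 : ℕ, y1 < y2 → y2 < y3 → y3 < y4 → y4 < w.length →
      (∀ j : ℕ, (j = a ∨ j = b2 ∨ j = c ∨ j = d) ↔ (j = y1 ∨ j = y2 ∨ j = y3 ∨ j = y4)) →
      pairedSubword w i =
        [w.getD y1 true, w.getD y2 true, w.getD y3 true, w.getD y4 true] := by
    intro y1 y2 y3 y4 g12 g23 g34 g4 hset
    have hps : pairedSubword w i =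
        ((List.range w.length).filter (fun j =>
          ([(occPos w true).getD (i-1) 0, (occPos w true).getD i 0,
            (occPos w false).getD (i-1) 0, (occPos w false).getD i 0] : List ℕ).contains j)).map
          (fun j => w.getD j true) := rfl
    rw [hps, filter_mem_four g12 g23 g34 g4 _ (fun j => (hkeep j).trans (hset j))]
    simp
  constructor
  · intro hpat
    by_cases hgood : a < c ∧ c < b2 ∧ b2 < d
    · obtain ⟨o1, o2, o3⟩ := hgood
      -- c = 2i-1 and b2 = 2i
      have m1 := count_take_succ_getElem w x haL
      have m2 := count_take_mono w x (show a + 1 ≤ c by omega)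
      have m3 := count_take_mono w x (le_of_lt o2)
      rw [hac] at m1
      simp only [haw, if_pos] at m1
      have hcx : (w.take c).count x = i := by rw [hbc] at m3; omega
      have hclen : c = 2*i - 1 := by
        have hb := bool_count_add (w.take c) x
        rw [List.length_take] at hb
        omega
      have m4 := count_take_succ_getElem w (!x) hcL
      have m5 := count_take_mono w (!x) (show c + 1 ≤ b2 by omega)
      have m6 := count_take_mono w (!x) (le_of_lt o3)
      rw [hcc] at m4
      simp only [hcw, if_pos] at m4
      have hbnx : (w.take b2).count (!x) = i := by rw [hdc] at m6; omega
      have hblen : b2 = 2*i := by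
        have hb := bool_count_add (w.take b2) x
        rw [List.length_take] at hb
        omega
      refine ⟨⟨?_, ?_⟩, ?_, ?_⟩
      · rw [← hblen]; exact hbc
      · rw [← hblen]; exact hbnx
      · rw [← hclen, getD_indep hcL x true]; exact hcw'
      · rw [← hblen, getD_indep hbL (!x) true]; exact hbw'
    · exfalso
      have horders : (a<b2 ∧ b2<c ∧ c<d) ∨ (a<c ∧ c<d ∧ d<b2) ∨ (c<a ∧ a<b2 ∧ b2<d) ∨
          (c<a ∧ a<d ∧ d<b2) ∨ (c<d ∧ d<a ∧ a<b2) := by omega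
      rcases horders with ⟨o1,o2,o3⟩|⟨o1,o2,o3⟩|⟨o1,o2,o3⟩|⟨o1,o2,o3⟩|⟨o1,o2,o3⟩
      · rw [key4 a b2 c d o1 o2 o3 hdL (by intro j; omega)] at hpat
        simp only [List.cons.injEq, and_true] at hpat
        exact hxnx (hbw'.symm.trans hpat.2.1)
      · rw [key4 a c d b2 o1 o2 o3 hbL (by intro j; omega)] at hpat
        simp only [List.cons.injEq, and_true] at hpat
        exact hxnx ((hdw'.symm.trans hpat.2.2.1).symm)
      · rw [key4 c a b2 d o1 o2 o3 hdL (by intro j; omega)] at hpat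
        simp only [List.cons.injEq, and_true] at hpat
        exact hxnx ((hcw'.symm.trans hpat.1).symm)
      · rw [key4 c a d b2 o1 o2 o3 hbL (by intro j; omega)] at hpat
        simp only [List.cons.injEq, and_true] at hpat
        exact hxnx ((hcw'.symm.trans hpat.1).symm)
      · rw [key4 c d a b2 o1 o2 o3 hbL (by intro j; omega)] at hpat
        simp only [List.cons.injEq, and_true] at hpat
        exact hxnx ((hcw'.symm.trans hpat.1).symm)
  · rintro ⟨⟨hcx, hcnx⟩, hl1, hl2⟩
    have h2i : 2*i < w.length := by omega
    have h2i1 : 2*i - 1 < w.length := by omega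
    have wl1 : w.getD (2*i-1) true = !x := by rw [getD_indep h2i1 true x]; exact hl1
    have wl2 : w.getD (2*i) true = x := by rw [getD_indep h2i true (!x)]; exact hl2
    have wl1' : w[2*i-1] = !x := by rw [← List.getD_eq_getElem w true h2i1]; exact wl1
    have wl2' : w[2*i] = x := by rw [← List.getD_eq_getElem w true h2i]; exact wl2
    have hcnt : (w.take (2*i-1)).count (!x) = i - 1 := by
      have m := count_take_succ_getElem w (!x) h2i1
      rw [show 2*i-1+1 = 2*i by omega] at m
      simp only [wl1', if_pos] at m
      omega
    have hc2 : c = 2*i - 1 :=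
      hcdef.symm.trans ((occPos_getD_eq_iff hi3).2 ⟨h2i1, wl1', hcnt⟩)
    have hb2 : b2 = 2*i :=
      hbdef.symm.trans ((occPos_getD_eq_iff hi2).2 ⟨h2i, wl2', hcx⟩)
    have hac2 : a < c := by
      have hane : a ≠ 2*i - 1 := fun h => hxnx (by rw [h] at haw'; exact haw'.symm.trans wl1)
      omega
    have hbd2 : b2 < d := by
      have hdne : d ≠ 2*i := fun h => hxnx (by rw [h] at hdw'; exact (hdw'.symm.trans wl2).symm)
      omega
    rw [key4 a c b2 d hac2 (by omega) hbd2 hdL (by intro j; omega)]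
    rw [haw', hbw', hcw', hdw']

theorem P2_matches_eq_bounceMinus
    (n : ℕ) (hn : 1 ≤ n) (w : List Bool) (hw : memL n w) :
    pmch n P2 w = bounceMinus n w ∧ pmch n P5 w = bouncePlus n w := by
  obtain ⟨hT, hF⟩ := hw
  constructor
  · unfold pmch bounceMinus
    congr 1
    apply Finset.filter_congr
    intro i hi
    rw [Finset.mem_Icc] at hi
    have h := core true hi.1 hi.2 hn hT (by simpa using hF)
    simp only [Bool.not_true] at h
    rw [show P2 = [true, false, true, false] from rfl, h]
  · unfold pmch bouncePlus
    congr 1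
    apply Finset.filter_congr
    intro i hi
    rw [Finset.mem_Icc] at hi
    have h := core false hi.1 hi.2 hn hF (by simpa using hT)
    simp only [Bool.not_false] at h
    rw [show P5 = [false, true, false, true] from rfl, h]
    constructor
    · rintro ⟨⟨u1, u2⟩, u3, u4⟩; exact ⟨⟨u2, u1⟩, u3, u4⟩
    · rintro ⟨⟨u1, u2⟩, u3, u4⟩; exact ⟨⟨u2, u1⟩, u3, u4⟩
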